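/- Fix m ≥ 1. If a sequence ρ̃ : ℕ → [0,∞) satisfies the recursion ρ̃(l) = 2m(1-m)/((2m+1)l + 1) + (1/((2m+1)l + 1))·(Σ_{i=1}^{l-1} i(l-i) ρ̃(i) ρ̃(l-i) - 2 Σ_{i=1}^{l-1} ρ̃(i)) for all l ≥ 1, and Σ_{l≥1} l ρ̃(l) = m, then a contradiction follows: if m > 1 then ρ̃(1) = m(1-m)/(m+1) < 0, and if m = 1 then ρ̃(l) = 0 for all l, contradicting Σ l ρ̃(l) = 1. -/

import Mathlib

theorem stmt_15 (m : ℝ) (hm : 1 ≤ m) (ρ : ℕ → ℝ)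
    (hpos : ∀ l : ℕ, 1 ≤ l → 0 ≤ ρ l)
    (hrec : ∀ l : ℕ, 1 ≤ l →
      ρ l = 2*m*(1-m) / ((2*m+1)*l + 1)
        + (1 / ((2*m+1)*l + 1)) *
          ((∑ i ∈ Finset.Ico 1 l, (i:ℝ) * ((l:ℝ) - i) * ρ i * ρ (l-i))
            - 2 * ∑ i ∈ Finset.Ico 1 l, ρ i))
    (hmass : HasSum (fun l : ℕ => ((l+1 : ℕ) : ℝ) * ρ (l+1)) m) :
    False := by
  rcases eq_or_lt_of_le hm with h1 | h1
  · -- m = 1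
    subst h1
    have hz : ∀ l, 1 ≤ l → ρ l = 0 := by
      intro l
      induction l using Nat.strong_induction_on with
      | _ l ih =>
        intro hl
        have h := hrec l hl
        have hs1 : (∑ i ∈ Finset.Ico 1 l, (i:ℝ) * ((l:ℝ) - i) * ρ i * ρ (l-i)) = 0 := by
          apply Finset.sum_eq_zero
          intro i hi
          simp only [Finset.mem_Ico] at hi
          rw [ih i hi.2 hi.1]
          ring
        have hs2 : (∑ i ∈ Finset.Ico 1 l, ρ i) = 0 := by
          apply Finset.sum_eq_zero
          intro i hi
          simp only [Finset.mem_Ico] at hi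
          exact ih i hi.2 hi.1
        rw [hs1, hs2] at h
        simp at h
        exact h
    have hzero : (fun l : ℕ => ((l+1 : ℕ) : ℝ) * ρ (l+1)) = fun _ => (0:ℝ) := by
      funext l
      rw [hz (l+1) (Nat.le_add_left 1 l)]
      ring
    rw [hzero] at hmass
    have := hmass.unique hasSum_zero
    norm_num at this
  · -- m > 1
    have h := hrec 1 le_rfl
    simp only [Finset.Ico_self, Finset.sum_empty, Nat.cast_one, mul_one] at h
    have hρ := hpos 1 le_rfl
    have hden : 0 < 2*m + 1 + 1 := by linarith
    have hneg : 2*m*(1-m) < 0 := by nlinarith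
    have : ρ 1 < 0 := by
      rw [h]
      have := div_neg_of_neg_of_pos hneg hden
      linarith
    linarith
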